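/- The map ε is a counit for Δ on kX_∞: for every w ∈ kX_∞, (ε⊗id)Δ(w) = 1_k ⊗ w in k ⊗ kX_∞ and (id⊗ε)Δ(w) = w ⊗ 1_k in kX_∞ ⊗ k. -/

import Mathlib

open TensorProduct

universe u v

/-- Letters of Rota-Baxter bracketed words: either a variable from `X` or a
bracketed word `⌊w⌋` (a list of letters). -/
inductive RBL (X : Type u) : Type u
  | var : X → RBL X
  | br : List (RBL X) → RBL X

namespace RBL

variable {X : Type u}

/-- `a.isBr = true` iff the letter `a` is a bracketed element `⌊w⌋ ∈ ⌊X_∞⌋`. -/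
def isBr : RBL X → Bool
  | var _ => false
  | br _ => true

mutual
  /-- Validity of a letter: the inside of a bracket must be a Rota-Baxter bracketed word. -/
  def valid : RBL X → Prop
    | var _ => True
    | br l => wordValid l
  /-- `wordValid l` says that the list of letters `l` is a Rota-Baxter bracketed word,
  i.e. all letters are valid and the letters alternate (no two consecutive brackets). -/
  def wordValid : List (RBL X) → Prop
    | [] => True
    | [a] => valid a
    | a :: b :: l => valid a ∧ ¬(a.isBr = true ∧ b.isBr = true) ∧ wordValid (b :: l)
end

lemma wordValid_nil : wordValid ([] : List (RBL X)) := by simp [wordValid]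

lemma wordValid_var (x : X) : wordValid [var x] := by simp [wordValid, valid]

lemma wordValid_br {l : List (RBL X)} (h : wordValid l) : wordValid [br l] := by
  simpa [wordValid, valid] using h

mutual
  /-- The total degree of a letter. -/
  def degL : RBL X → ℕ
    | var _ => 1
    | br l => degW l + 1
  /-- The total degree of a word: the number of occurrences of brackets (i.e. of `P`)
  plus the number of occurrences of letters of `X`. -/
  def degW : List (RBL X) → ℕ
    | [] => 0
    | a :: l => degL a + degW l
end

end RBL

/-- The set `X_∞` of Rota-Baxter bracketed words on `X`. -/
def RBWord (X : Type u) : Type u := {l : List (RBL X) // RBL.wordValid l}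

namespace RBWord

variable {X : Type u}

/-- The empty word `1`. -/
def one : RBWord X := ⟨[], RBL.wordValid_nil⟩

/-- The total degree of a Rota-Baxter bracketed word. -/
def deg (w : RBWord X) : ℕ := RBL.degW w.1

end RBWord

variable (k : Type v) [CommRing k] (X : Type u)

/-- The free `k`-module `kX_∞` on the Rota-Baxter bracketed words. -/
abbrev RBMod : Type max u v := RBWord X →₀ k

variable {X}

/-- A Rota-Baxter bracketed word viewed as a basis element of `kX_∞`. -/
noncomputable def sing (w : RBWord X) : RBMod k X := Finsupp.single w 1

variable (X)

/-- The Rota-Baxter operator `P` on `kX_∞`, sending a basis word `w` to `⌊w⌋`. -/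
noncomputable def Pop : RBMod k X →ₗ[k] RBMod k X :=
  Finsupp.lmapDomain k k fun w => (⟨[RBL.br w.1], RBL.wordValid_br w.2⟩ : RBWord X)

/-- Concatenation on the left by `u₀` and on the right by `v₀`, as a linear map on `kX_∞`
(sending basis words whose concatenation is not valid to `0`; in all uses below
the concatenations are valid). -/
noncomputable def concatLR (u₀ v₀ : List (RBL X)) : RBMod k X →ₗ[k] RBMod k X :=
  Finsupp.lsum k fun w =>
    letI := Classical.dec (RBL.wordValid (u₀ ++ w.1 ++ v₀))
    if h : RBL.wordValid (u₀ ++ w.1 ++ v₀) then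
      Finsupp.lsingle (⟨u₀ ++ w.1 ++ v₀, h⟩ : RBWord X) else 0

/-- The counit `ε : kX_∞ → k`, `ε(1) = 1` and `ε(w) = 0` for basis words `w ≠ 1`. -/
noncomputable def eps : RBMod k X →ₗ[k] k := Finsupp.lapply RBWord.one

/-- The homogeneous component `H^(n)` of `kX_∞`: the span of the basis words of total
degree `n`. -/
noncomputable def Hdeg (n : ℕ) : Submodule k (RBMod k X) :=
  Finsupp.supported k k {w : RBWord X | w.deg = n}

variable (lam : k)

/-- The data of the product `⋄` on the free Rota-Baxter algebra `kX_∞` of weight `lam`,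
together with its recursive defining equations:
* if the concatenation of `u` and `v` is again a Rota-Baxter bracketed word (in particular
  if `u` or `v` is empty, or if the last letter of `u` or the first letter of `v` is a
  variable), then `u ⋄ v` is the concatenation `uv`;
* if `u = u₀⌊ā⌋` and `v = ⌊b̄⌋v₀`, then
  `u ⋄ v = u₀(⌊⌊ā⌋ ⋄ b̄⌋ + ⌊ā ⋄ ⌊b̄⌋⌋ + λ⌊ā ⋄ b̄⌋)v₀`. -/
structure FreeRBAData where
  /-- the product `⋄`, as a `k`-bilinear map -/
  d : RBMod k X →ₗ[k] RBMod k X →ₗ[k] RBMod k X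
  d_concat : ∀ (u v : RBWord X) (h : RBL.wordValid (u.1 ++ v.1)),
    d (sing k u) (sing k v) = sing k ⟨u.1 ++ v.1, h⟩
  d_br : ∀ (u₀ v₀ : List (RBL X)) (a b : RBWord X)
    (hu : RBL.wordValid (u₀ ++ [RBL.br a.1])) (hv : RBL.wordValid (RBL.br b.1 :: v₀)),
    d (sing k ⟨u₀ ++ [RBL.br a.1], hu⟩) (sing k ⟨RBL.br b.1 :: v₀, hv⟩)
      = concatLR k X u₀ v₀
          (Pop k X (d (Pop k X (sing k a)) (sing k b))
            + Pop k X (d (sing k a) (Pop k X (sing k b)))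
            + lam • Pop k X (d (sing k a) (sing k b)))

namespace FreeRBAData

variable {k X lam}

/-- The componentwise product `⋄ ⊗ ⋄` on `kX_∞ ⊗ kX_∞`. -/
noncomputable def mulT (D : FreeRBAData k X lam) :
    (RBMod k X ⊗[k] RBMod k X) →ₗ[k] (RBMod k X ⊗[k] RBMod k X) →ₗ[k]
      (RBMod k X ⊗[k] RBMod k X) :=
  TensorProduct.map₂ D.d D.d

end FreeRBAData

/-- The free Rota-Baxter algebra `kX_∞` of weight `lam` together with the coproduct `Δ`,
characterized by its recursive defining equations:
`Δ(1) = 1 ⊗ 1`, `Δ(x) = x ⊗ 1 + 1 ⊗ x` for `x ∈ X`,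
`Δ(⌊w⌋) = ⌊w⌋ ⊗ 1 + (id ⊗ P)Δ(w)`, and
`Δ(w₁ ⋄ ⋯ ⋄ w_m) = Δ(w₁) ⋄ ⋯ ⋄ Δ(w_m)` for the `⋄`-factorization of a word into its
(alternating) sequence of letters. -/
structure FreeRBBialgData extends FreeRBAData k X lam where
  /-- the coproduct `Δ` -/
  Dl : RBMod k X →ₗ[k] (RBMod k X ⊗[k] RBMod k X)
  Dl_one : Dl (sing k RBWord.one) = sing k RBWord.one ⊗ₜ[k] sing k RBWord.one
  Dl_var : ∀ (x : X),
    Dl (sing k ⟨[RBL.var x], RBL.wordValid_var x⟩)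
      = sing k ⟨[RBL.var x], RBL.wordValid_var x⟩ ⊗ₜ[k] sing k RBWord.one
        + sing k RBWord.one ⊗ₜ[k] sing k ⟨[RBL.var x], RBL.wordValid_var x⟩
  Dl_br : ∀ w : RBWord X,
    Dl (Pop k X (sing k w))
      = Pop k X (sing k w) ⊗ₜ[k] sing k RBWord.one
        + TensorProduct.map LinearMap.id (Pop k X) (Dl (sing k w))
  Dl_cons : ∀ (a : RBL X) (l : List (RBL X)) (h : RBL.wordValid (a :: l))
    (ha : RBL.wordValid [a]) (hl : RBL.wordValid l), l ≠ [] →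
    Dl (sing k ⟨a :: l, h⟩)
      = TensorProduct.map₂ d d (Dl (sing k ⟨[a], ha⟩)) (Dl (sing k ⟨l, hl⟩))

namespace RBL

variable {X : Type u}

lemma wordValid_map_var (s : List X) : wordValid (s.map RBL.var) := by
  induction s with
  | nil => exact wordValid_nil
  | cons a t ih =>
    cases t with
    | nil => exact wordValid_var a
    | cons b t' =>
      simp only [List.map_cons] at ih ⊢
      exact ⟨by simp [valid], by simp [isBr], ih⟩

end RBL

variable {X}

/-- The word `x₁ ⋯ x_m ∈ M(X)` as a basis element of `kX_∞`. -/
noncomputable def varWord (s : List X) : RBMod k X :=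
  sing k ⟨s.map RBL.var, RBL.wordValid_map_var s⟩

/-- A letter in `X ∪ ⌊X_∞⌋`, viewed as a basis element of `kX_∞` (invalid letters are
sent to `0`; they do not occur below). -/
noncomputable def letterMod (a : RBL X) : RBMod k X :=
  letI := Classical.dec (RBL.wordValid [a])
  if h : RBL.wordValid [a] then sing k ⟨[a], h⟩ else 0

variable (X)

/-- The tensor product `H^(p) ⊗ H^(q)` of homogeneous components, as a submodule of
`kX_∞ ⊗ kX_∞`. -/
noncomputable def HdegT (p q : ℕ) : Submodule k (RBMod k X ⊗[k] RBMod k X) :=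
  Submodule.map₂ (TensorProduct.mk k (RBMod k X) (RBMod k X)) (Hdeg k X p) (Hdeg k X q)

namespace FreeRBAData

variable {k X lam}

/-- The `⋄`-product `w₁ ⋄ (w₂ ⋄ (⋯ ⋄ (w_m ⋄ 1)))` of a sequence of letters. -/
noncomputable def prodList (D : FreeRBAData k X lam) (l : List (RBL X)) : RBMod k X :=
  l.foldr (fun a acc => D.d (letterMod k a) acc) (sing k RBWord.one)

end FreeRBAData

section Aux

variable {k : Type v} [CommRing k] {X : Type u}

namespace RBL

lemma degL_pos (a : RBL X) : 0 < degL a := by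
  cases a <;> simp [degL]

lemma degW_cons (a : RBL X) (l : List (RBL X)) : degW (a :: l) = degL a + degW l := by
  simp [degW]

lemma degW_pos {l : List (RBL X)} (h : l ≠ []) : 0 < degW l := by
  cases l with
  | nil => exact absurd rfl h
  | cons a t => rw [degW_cons]; have := degL_pos (X := X) a; omega

lemma wordValid_cons_head {a : RBL X} {l : List (RBL X)} (h : wordValid (a :: l)) :
    valid a := by
  cases l with
  | nil => simpa [wordValid] using h
  | cons b t => exact h.1

lemma wordValid_cons_tail {a : RBL X} {l : List (RBL X)} (h : wordValid (a :: l)) :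
    wordValid l := by
  cases l with
  | nil => exact wordValid_nil
  | cons b t => exact h.2.2

lemma valid_of_mem {l : List (RBL X)} (h : wordValid l) {a : RBL X} (ha : a ∈ l) :
    valid a := by
  induction l with
  | nil => cases ha
  | cons b t ih =>
    rcases List.mem_cons.mp ha with rfl | ha'
    · exact wordValid_cons_head h
    · exact ih (wordValid_cons_tail h) ha'

lemma wordValid_append {l₁ l₂ : List (RBL X)} (h₁ : wordValid l₁) (h₂ : wordValid l₂)
    (h : ∀ a b, l₁.getLast? = some a → l₂.head? = some b →
      ¬(a.isBr = true ∧ b.isBr = true)) : wordValid (l₁ ++ l₂) := by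
  induction l₁ with
  | nil => simpa using h₂
  | cons a t ih =>
    cases t with
    | nil =>
      cases l₂ with
      | nil => simpa using h₁
      | cons b t₂ =>
        refine ⟨by simpa [wordValid] using h₁, h a b rfl rfl, h₂⟩
    | cons a' t' =>
      have hv : wordValid ((a' :: t') ++ l₂) := by
        refine ih h₁.2.2 ?_
        intro x y hx hy
        refine h x y ?_ hy
        rw [List.getLast?_cons_cons]; exact hx
      exact ⟨h₁.1, h₁.2.1, hv⟩

end RBL

open RBL

lemma eps_one : eps k X (sing k (RBWord.one : RBWord X)) = 1 := by
  simp [eps, sing, Finsupp.lapply_apply]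

lemma eps_sing_ne {w : RBWord X} (h : w.1 ≠ []) : eps k X (sing k w) = 0 := by
  simp only [eps, sing, Finsupp.lapply_apply]
  exact Finsupp.single_eq_of_ne' (fun e => h (by rw [e]; rfl))

lemma Pop_sing (w : RBWord X) :
    Pop k X (sing k w) = sing k ⟨[RBL.br w.1], RBL.wordValid_br w.2⟩ := by
  simp [Pop, sing, Finsupp.lmapDomain_apply, Finsupp.mapDomain_single]

  exact Finsupp.mapDomain_single
lemma eps_Pop (m : RBMod k X) : eps k X (Pop k X m) = 0 := by
  have h : (eps k X).comp (Pop k X) = 0 := by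
    apply Finsupp.lhom_ext
    intro w b
    simp only [LinearMap.comp_apply, Pop, Finsupp.lmapDomain_apply,
      Finsupp.mapDomain_single, eps, Finsupp.lapply_apply, LinearMap.zero_apply]
    erw [show (Finsupp.lmapDomain k k (fun w : {l : List (RBL X) // RBL.wordValid l} => (⟨[RBL.br w.1], RBL.wordValid_br w.2⟩ : RBWord X)) (Finsupp.single w b) : RBMod k X) = Finsupp.single (⟨[RBL.br w.1], RBL.wordValid_br w.2⟩ : RBWord X) b from Finsupp.mapDomain_single]
    erw [Finsupp.single_eq_of_ne']
    intro e
    exact List.cons_ne_nil _ _ (congrArg Subtype.val e)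
  exact LinearMap.congr_fun h m

lemma eps_concatLR_Pop (u₀ v₀ : List (RBL X)) (m : RBMod k X) :
    eps k X (concatLR k X u₀ v₀ (Pop k X m)) = 0 := by
  have h : (eps k X).comp ((concatLR k X u₀ v₀).comp (Pop k X)) = 0 := by
    apply Finsupp.lhom_ext
    intro w b
    simp only [LinearMap.comp_apply, Pop, Finsupp.lmapDomain_apply,
      Finsupp.mapDomain_single, concatLR, Finsupp.lsum_single, LinearMap.zero_apply]
    erw [show (Finsupp.lmapDomain k k (fun w : {l : List (RBL X) // RBL.wordValid l} => (⟨[RBL.br w.1], RBL.wordValid_br w.2⟩ : RBWord X)) (Finsupp.single w b) : RBMod k X) = Finsupp.single (⟨[RBL.br w.1], RBL.wordValid_br w.2⟩ : RBWord X) b from Finsupp.mapDomain_single]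
    erw [Finsupp.lsum_single]
    split_ifs with hval
    · simp only [Finsupp.lsingle_apply, eps, Finsupp.lapply_apply]
      erw [Finsupp.lsingle_apply, Finsupp.single_eq_of_ne']
      intro e
      have : u₀ ++ [RBL.br w.1] ++ v₀ = ([] : List (RBL X)) := congrArg Subtype.val e
      simp at this
    · simp
  exact LinearMap.congr_fun h m

variable {lam : k}

lemma eps_d_sing (D : FreeRBAData k X lam) (u v : RBWord X) :
    eps k X (D.d (sing k u) (sing k v)) = eps k X (sing k u) * eps k X (sing k v) := by
  obtain ⟨lu, hlu⟩ := u
  obtain ⟨lv, hlv⟩ := v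
  cases lv with
  | nil =>
    have h : RBL.wordValid (lu ++ ([] : List (RBL X))) := by simpa using hlu
    rw [D.d_concat ⟨lu, hlu⟩ ⟨[], hlv⟩ h]
    have h1 : (⟨lu ++ [], h⟩ : RBWord X) = ⟨lu, hlu⟩ := Subtype.ext (by simp)
    have h2 : (⟨[], hlv⟩ : RBWord X) = RBWord.one := rfl
    rw [h1, h2, eps_one, mul_one]
  | cons b v₀ =>
    have hvne : eps k X (sing k (⟨b :: v₀, hlv⟩ : RBWord X)) = 0 :=
      eps_sing_ne (by simp)
    cases b with
    | var x =>
      have h : RBL.wordValid (lu ++ RBL.var x :: v₀) := by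
        refine wordValid_append hlu hlv ?_
        intro a b _ hb hab
        rw [List.head?_cons, Option.some.injEq] at hb
        subst hb
        simp [RBL.isBr] at hab
      rw [D.d_concat ⟨lu, hlu⟩ ⟨RBL.var x :: v₀, hlv⟩ h, hvne, mul_zero]
      exact eps_sing_ne (by simp)
    | br lb =>
      rcases List.eq_nil_or_concat lu with rfl | ⟨u₀, c, hlu'⟩
      · have h : RBL.wordValid (([] : List (RBL X)) ++ RBL.br lb :: v₀) := by simpa using hlv
        rw [D.d_concat ⟨[], hlu⟩ ⟨RBL.br lb :: v₀, hlv⟩ h]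
        have h1 : (⟨[] ++ RBL.br lb :: v₀, h⟩ : RBWord X) = ⟨RBL.br lb :: v₀, hlv⟩ :=
          Subtype.ext (by simp)
        have h2 : (⟨[], hlu⟩ : RBWord X) = RBWord.one := rfl
        rw [h1, h2, eps_one, one_mul]
      · obtain rfl : lu = u₀ ++ [c] := by simpa [List.concat_eq_append] using hlu'
        have hune : eps k X (sing k (⟨u₀ ++ [c], hlu⟩ : RBWord X)) = 0 :=
          eps_sing_ne (by simp)
        cases c with
        | var x =>
          have h : RBL.wordValid ((u₀ ++ [RBL.var x]) ++ RBL.br lb :: v₀) := by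
            refine wordValid_append hlu hlv ?_
            intro a b ha _ hab
            rw [List.getLast?_concat, Option.some.injEq] at ha
            subst ha
            simp [RBL.isBr] at hab
          rw [D.d_concat ⟨u₀ ++ [RBL.var x], hlu⟩ ⟨RBL.br lb :: v₀, hlv⟩ h, hune, zero_mul]
          exact eps_sing_ne (by simp)
        | br la =>
          have hwla : RBL.wordValid la := by
            have := valid_of_mem hlu (a := RBL.br la) (by simp)
            simpa [RBL.valid] using this
          have hwlb : RBL.wordValid lb := by
            have := valid_of_mem hlv (a := RBL.br lb) (by simp)
            simpa [RBL.valid] using this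
          have e := D.d_br u₀ v₀ ⟨la, hwla⟩ ⟨lb, hwlb⟩ hlu hlv
          rw [e, hune, zero_mul]
          simp only [map_add, map_smul, eps_concatLR_Pop, smul_zero, add_zero, zero_add]

lemma eps_d (D : FreeRBAData k X lam) (u v : RBMod k X) :
    eps k X (D.d u v) = eps k X u * eps k X v := by
  induction u using Finsupp.induction_linear with
  | zero => simp
  | add f g hf hg => simp [map_add, add_mul, hf, hg]
  | single w b =>
    induction v using Finsupp.induction_linear with
    | zero => simp
    | add f g hf hg => simp [map_add, mul_add, hf, hg]
    | single w' c =>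
      have h1 : (Finsupp.single w b : RBMod k X) = b • sing k w := by
        simp [sing, Finsupp.smul_single]
      have h2 : (Finsupp.single w' c : RBMod k X) = c • sing k w' := by
        simp [sing, Finsupp.smul_single]
      rw [h1, h2]
      simp only [map_smul, LinearMap.smul_apply, smul_eq_mul, eps_d_sing D w w']
      ring

/-- The left counit contraction `kX_∞ ⊗ kX_∞ → kX_∞`, `x ⊗ y ↦ ε(x) y`. -/
noncomputable def Lmap (k : Type v) [CommRing k] (X : Type u) :
    (RBMod k X ⊗[k] RBMod k X) →ₗ[k] RBMod k X :=
  (TensorProduct.lid k (RBMod k X)).toLinearMap ∘ₗ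
    TensorProduct.map (eps k X) LinearMap.id

/-- The right counit contraction `kX_∞ ⊗ kX_∞ → kX_∞`, `x ⊗ y ↦ ε(y) x`. -/
noncomputable def Rmap (k : Type v) [CommRing k] (X : Type u) :
    (RBMod k X ⊗[k] RBMod k X) →ₗ[k] RBMod k X :=
  (TensorProduct.rid k (RBMod k X)).toLinearMap ∘ₗ
    TensorProduct.map LinearMap.id (eps k X)

@[simp] lemma Lmap_tmul (x y : RBMod k X) :
    Lmap k X (x ⊗ₜ[k] y) = eps k X x • y := by
  simp [Lmap]

@[simp] lemma Rmap_tmul (x y : RBMod k X) :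
    Rmap k X (x ⊗ₜ[k] y) = eps k X y • x := by
  simp [Rmap]

lemma Lmap_map₂ (D : FreeRBAData k X lam) (s t : RBMod k X ⊗[k] RBMod k X) :
    Lmap k X (TensorProduct.map₂ D.d D.d s t) = D.d (Lmap k X s) (Lmap k X t) := by
  induction s using TensorProduct.induction_on with
  | zero => simp
  | tmul x y =>
    induction t using TensorProduct.induction_on with
    | zero => simp
    | tmul x' y' =>
      simp only [TensorProduct.map₂_apply_tmul, TensorProduct.map_tmul, Lmap_tmul,
        map_smul, LinearMap.smul_apply, eps_d D, mul_smul]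
      rw [smul_comm]
    | add t1 t2 ih1 ih2 => simp only [map_add, ih1, ih2]
  | add s1 s2 ih1 ih2 =>
    simp only [map_add, LinearMap.add_apply, LinearMap.map_add₂, ih1, ih2]

lemma Rmap_map₂ (D : FreeRBAData k X lam) (s t : RBMod k X ⊗[k] RBMod k X) :
    Rmap k X (TensorProduct.map₂ D.d D.d s t) = D.d (Rmap k X s) (Rmap k X t) := by
  induction s using TensorProduct.induction_on with
  | zero => simp
  | tmul x y =>
    induction t using TensorProduct.induction_on with
    | zero => simp
    | tmul x' y' =>
      simp only [TensorProduct.map₂_apply_tmul, TensorProduct.map_tmul, Rmap_tmul,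
        map_smul, LinearMap.smul_apply, eps_d D, mul_smul]
      rw [smul_comm]
    | add t1 t2 ih1 ih2 => simp only [map_add, ih1, ih2]
  | add s1 s2 ih1 ih2 =>
    simp only [map_add, LinearMap.add_apply, LinearMap.map_add₂, ih1, ih2]

lemma Lmap_map_id_Pop (z : RBMod k X ⊗[k] RBMod k X) :
    Lmap k X (TensorProduct.map LinearMap.id (Pop k X) z) = Pop k X (Lmap k X z) := by
  induction z using TensorProduct.induction_on with
  | zero => simp
  | tmul x y => simp [map_smul]
  | add z1 z2 ih1 ih2 => simp only [map_add, ih1, ih2]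

lemma Rmap_map_id_Pop (z : RBMod k X ⊗[k] RBMod k X) :
    Rmap k X (TensorProduct.map LinearMap.id (Pop k X) z) = 0 := by
  induction z using TensorProduct.induction_on with
  | zero => simp
  | tmul x y => simp [eps_Pop]
  | add z1 z2 ih1 ih2 => simp only [map_add, ih1, ih2, add_zero]

lemma counit_sing (D : FreeRBBialgData k X lam) :
    ∀ (n : ℕ) (w : RBWord X), RBWord.deg w = n →
      Lmap k X (D.Dl (sing k w)) = sing k w ∧ Rmap k X (D.Dl (sing k w)) = sing k w := by
  intro n
  induction n using Nat.strong_induction_on with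
  | _ n ih =>
  rintro ⟨l, hl⟩ hdeg
  cases l with
  | nil =>
    have hw : (⟨[], hl⟩ : RBWord X) = RBWord.one := rfl
    rw [hw, D.Dl_one]
    constructor <;> simp [eps_one]
  | cons a t =>
    cases t with
    | nil =>
      cases a with
      | var x =>
        have hw : (⟨[RBL.var x], hl⟩ : RBWord X) = ⟨[RBL.var x], RBL.wordValid_var x⟩ :=
          rfl
        rw [hw, D.Dl_var x]
        have h0 : eps k X (sing k (⟨[RBL.var x], RBL.wordValid_var x⟩ : RBWord X)) = 0 :=
          eps_sing_ne (by simp)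
        constructor <;> simp [h0, eps_one]
      | br la =>
        have hwla : RBL.wordValid la := by
          have := valid_of_mem hl (a := RBL.br la) (by simp)
          simpa [RBL.valid] using this
        have hs : sing k (⟨[RBL.br la], hl⟩ : RBWord X)
            = Pop k X (sing k (⟨la, hwla⟩ : RBWord X)) :=
          (Pop_sing (⟨la, hwla⟩ : RBWord X)).symm
        have hdeg' : RBWord.deg (⟨la, hwla⟩ : RBWord X) < n := by
          have : RBWord.deg (⟨[RBL.br la], hl⟩ : RBWord X) = RBL.degW la + 1 := by
            simp [RBWord.deg, RBL.degW, RBL.degL]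
          rw [this] at hdeg
          simp only [RBWord.deg]
          omega
        obtain ⟨ihL, ihR⟩ := ih _ hdeg' (⟨la, hwla⟩ : RBWord X) rfl
        rw [hs, D.Dl_br ⟨la, hwla⟩]
        constructor
        · rw [map_add, Lmap_tmul, Lmap_map_id_Pop, ihL, eps_Pop, zero_smul, zero_add]
        · rw [map_add, Rmap_tmul, Rmap_map_id_Pop, eps_one, one_smul, add_zero]
    | cons b t' =>
      have ha : RBL.wordValid [a] := by
        have := hl.1
        simpa [RBL.wordValid] using this
      have hlt : RBL.wordValid (b :: t') := hl.2.2
      have hda : RBWord.deg (⟨[a], ha⟩ : RBWord X) < n := by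
        have h1 := RBL.degL_pos (X := X) a
        have h2 := RBL.degW_pos (l := b :: t') (X := X) (by simp)
        have : RBWord.deg (⟨a :: b :: t', hl⟩ : RBWord X)
            = RBL.degL a + RBL.degW (b :: t') := by
          simp [RBWord.deg, RBL.degW_cons]
        rw [this] at hdeg
        simp only [RBWord.deg, RBL.degW_cons, RBL.degW]
        omega
      have hdt : RBWord.deg (⟨b :: t', hlt⟩ : RBWord X) < n := by
        have h1 := RBL.degL_pos (X := X) a
        have : RBWord.deg (⟨a :: b :: t', hl⟩ : RBWord X)
            = RBL.degL a + RBL.degW (b :: t') := by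
          simp [RBWord.deg, RBL.degW_cons]
        rw [this] at hdeg
        simp only [RBWord.deg]
        omega
      obtain ⟨ihL1, ihR1⟩ := ih _ hda (⟨[a], ha⟩ : RBWord X) rfl
      obtain ⟨ihL2, ihR2⟩ := ih _ hdt (⟨b :: t', hlt⟩ : RBWord X) rfl
      rw [D.Dl_cons a (b :: t') hl ha hlt (by simp)]
      have hcat : RBL.wordValid ([a] ++ b :: t') := hl
      have hd : D.d (sing k (⟨[a], ha⟩ : RBWord X)) (sing k (⟨b :: t', hlt⟩ : RBWord X))
          = sing k (⟨a :: b :: t', hl⟩ : RBWord X) :=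
        D.d_concat ⟨[a], ha⟩ ⟨b :: t', hlt⟩ hcat
      constructor
      · rw [Lmap_map₂ D.toFreeRBAData, ihL1, ihL2, hd]
      · rw [Rmap_map₂ D.toFreeRBAData, ihR1, ihR2, hd]

end Aux

/-- `ε` is a counit for `Δ` on `kX_∞`: for every `w ∈ kX_∞`,
`(ε ⊗ id)Δ(w) = 1_k ⊗ w` in `k ⊗ kX_∞` and `(id ⊗ ε)Δ(w) = w ⊗ 1_k` in `kX_∞ ⊗ k`. -/
theorem counit_property
    {k : Type v} [CommRing k] {X : Type u} {lam : k} (D : FreeRBBialgData k X lam)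
    (w : RBMod k X) :
    TensorProduct.map (eps k X) LinearMap.id (D.Dl w) = (1 : k) ⊗ₜ[k] w ∧
    TensorProduct.map LinearMap.id (eps k X) (D.Dl w) = w ⊗ₜ[k] (1 : k) := by
  have hL : ∀ m : RBMod k X, Lmap k X (D.Dl m) = m := by
    have h : (Lmap k X).comp D.Dl = LinearMap.id := by
      apply Finsupp.lhom_ext
      intro w b
      have hw := (counit_sing D (RBWord.deg w) w rfl).1
      have hb : (Finsupp.single w b : RBMod k X) = b • sing k w := by
        simp [sing, Finsupp.smul_single]
      simp [hb, map_smul, hw]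
    intro m
    exact LinearMap.congr_fun h m
  have hR : ∀ m : RBMod k X, Rmap k X (D.Dl m) = m := by
    have h : (Rmap k X).comp D.Dl = LinearMap.id := by
      apply Finsupp.lhom_ext
      intro w b
      have hw := (counit_sing D (RBWord.deg w) w rfl).2
      have hb : (Finsupp.single w b : RBMod k X) = b • sing k w := by
        simp [sing, Finsupp.smul_single]
      simp [hb, map_smul, hw]
    intro m
    exact LinearMap.congr_fun h m
  constructor
  · have h1 := hL w
    simp only [Lmap, LinearMap.comp_apply, LinearEquiv.coe_coe] at h1
    calc TensorProduct.map (eps k X) LinearMap.id (D.Dl w)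
        = (TensorProduct.lid k (RBMod k X)).symm
            ((TensorProduct.lid k (RBMod k X))
              (TensorProduct.map (eps k X) LinearMap.id (D.Dl w))) :=
          (LinearEquiv.symm_apply_apply _ _).symm
      _ = (TensorProduct.lid k (RBMod k X)).symm w := by rw [h1]
      _ = (1 : k) ⊗ₜ[k] w := TensorProduct.lid_symm_apply w
  · have h1 := hR w
    simp only [Rmap, LinearMap.comp_apply, LinearEquiv.coe_coe] at h1
    calc TensorProduct.map LinearMap.id (eps k X) (D.Dl w)
        = (TensorProduct.rid k (RBMod k X)).symm
            ((TensorProduct.rid k (RBMod k X))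
              (TensorProduct.map LinearMap.id (eps k X) (D.Dl w))) :=
          (LinearEquiv.symm_apply_apply _ _).symm
      _ = (TensorProduct.rid k (RBMod k X)).symm w := by rw [h1]
      _ = w ⊗ₜ[k] (1 : k) := TensorProduct.rid_symm_apply w
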